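/- If f is m_f-strongly convex with L_f-Lipschitz gradient and e := ∇f(a) − ∇f(b) − m_f(a − b) satisfies ⟨e, a − b⟩ = 0, then e = 0, i.e., ∇f(a) − ∇f(b) = m_f(a − b). -/

import Mathlib

open RealInnerProductSpace

section Aux

variable {E : Type*} [NormedAddCommGroup E] [InnerProductSpace ℝ E] [CompleteSpace E]

/-- Derivative of `h` along a line, given its gradient. -/
lemma aux_hasDerivAt_line {h : E → ℝ} {g : E → E}
    (hg : ∀ x, HasGradientAt h (g x) x) (x v : E) (t : ℝ) :
    HasDerivAt (fun s : ℝ => h (x + s • v)) ⟪g (x + t • v), v⟫ t := by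
  have hc : HasDerivAt (fun s : ℝ => x + s • v) v t := by
    simpa using ((hasDerivAt_id t).smul_const v).const_add x
  have hF : HasFDerivAt h (InnerProductSpace.toDual ℝ E (g (x + t • v))) (x + t • v) :=
    (hg _).hasFDerivAt
  have hcomp := hF.comp_hasDerivAt t hc
  simp [InnerProductSpace.toDual_apply_apply] at hcomp
  exact hcomp

/-- First-order condition for a convex differentiable function. -/
lemma aux_first_order {h : E → ℝ} {g : E → E}
    (hg : ∀ x, HasGradientAt h (g x) x) (hconv : ConvexOn ℝ Set.univ h)
    (x y : E) : h x + ⟪g x, y - x⟫ ≤ h y := by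
  set v := y - x with hv
  have hφ : ConvexOn ℝ Set.univ (fun t : ℝ => h (x + t • v)) := by
    have := hconv.comp_affineMap (AffineMap.lineMap x (x + v) : ℝ →ᵃ[ℝ] E)
    simpa [Function.comp_def, AffineMap.lineMap_apply, add_comm] using this
  have hd0 : HasDerivAt (fun s : ℝ => h (x + s • v)) ⟪g x, v⟫ 0 := by
    simpa using aux_hasDerivAt_line hg x v 0
  have hs := hφ.le_slope_of_hasDerivAt (Set.mem_univ (0 : ℝ)) (Set.mem_univ 1)
    one_pos hd0
  have : ⟪g x, v⟫ ≤ h (x + v) - h x := by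
    simpa [slope_def_field] using hs
  have hxy : x + v = y := by rw [hv]; abel
  rw [hxy] at this
  linarith

/-- Descent lemma: upper quadratic bound from Lipschitz gradient. -/
lemma aux_descent {h : E → ℝ} {g : E → E} {L : ℝ} (hL : 0 < L)
    (hg : ∀ x, HasGradientAt h (g x) x)
    (hlip : ∀ a b, ‖g a - g b‖ ≤ L * ‖a - b‖)
    (x y : E) : h y ≤ h x + ⟪g x, y - x⟫ + L / 2 * ‖y - x‖ ^ 2 := by
  set v := y - x with hv
  have hgc : Continuous g := by
    have hlw : LipschitzWith ⟨max L 0, le_max_right _ _⟩ g := by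
      apply LipschitzWith.of_dist_le_mul
      intro a b
      rw [dist_eq_norm, dist_eq_norm]
      calc ‖g a - g b‖ ≤ L * ‖a - b‖ := hlip a b
        _ ≤ max L 0 * ‖a - b‖ :=
            mul_le_mul_of_nonneg_right (le_max_left _ _) (norm_nonneg _)
    exact hlw.continuous
  set d : ℝ → ℝ := fun t => ⟪g (x + t • v), v⟫ with hd
  have hdc : Continuous d := by
    apply Continuous.inner
    · exact hgc.comp (by continuity)
    · exact continuous_const
  have hFTC : h (x + (1:ℝ) • v) - h (x + (0:ℝ) • v) = ∫ t in (0:ℝ)..1, d t := by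
    rw [← intervalIntegral.integral_eq_sub_of_hasDerivAt
      (fun t _ => aux_hasDerivAt_line hg x v t) (hdc.intervalIntegrable 0 1)]
  have hbound : ∀ t ∈ Set.Icc (0:ℝ) 1, d t ≤ d 0 + L * ‖v‖ ^ 2 * t := by
    intro t ht
    have h1 : d t - d 0 = ⟪g (x + t • v) - g x, v⟫ := by
      simp [hd, inner_sub_left]
    have h2 : ⟪g (x + t • v) - g x, v⟫ ≤ ‖g (x + t • v) - g x‖ * ‖v‖ :=
      real_inner_le_norm _ _
    have h3 : ‖g (x + t • v) - g x‖ ≤ L * (t * ‖v‖) := by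
      have := hlip (x + t • v) x
      simpa [norm_smul, abs_of_nonneg ht.1] using this
    nlinarith [norm_nonneg v, mul_nonneg (mul_nonneg hL.le ht.1) (norm_nonneg v)]
  have hc1 : Continuous (fun t : ℝ => L * ‖v‖ ^ 2 * t) := by continuity
  have hc2 : Continuous (fun t : ℝ => d 0 + L * ‖v‖ ^ 2 * t) := by continuity
  have hint : (∫ t in (0:ℝ)..1, d t) ≤ ∫ t in (0:ℝ)..1, (d 0 + L * ‖v‖ ^ 2 * t) := by
    apply intervalIntegral.integral_mono_on zero_le_one
      (hdc.intervalIntegrable 0 1) (hc2.intervalIntegrable 0 1) hbound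
  have hval : (∫ t in (0:ℝ)..1, (d 0 + L * ‖v‖ ^ 2 * t)) = d 0 + L / 2 * ‖v‖ ^ 2 := by
    rw [intervalIntegral.integral_add intervalIntegrable_const
      (hc1.intervalIntegrable 0 1)]
    simp only [intervalIntegral.integral_const, smul_eq_mul]
    rw [intervalIntegral.integral_const_mul]
    have hid : (∫ t in (0:ℝ)..1, t) = 1 / 2 := by
      simp [integral_id]
    rw [hid]; ring
  have hd0 : d 0 = ⟪g x, v⟫ := by simp [hd]
  have : h (x + v) - h x ≤ ⟪g x, v⟫ + L / 2 * ‖v‖ ^ 2 := by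
    have := hFTC.le.trans (hint.trans hval.le)
    rw [hd0] at this
    simpa using this
  have hxy : x + v = y := by rw [hv]; abel
  rw [hxy] at this
  linarith

/-- Bregman-type lower bound for convex functions with Lipschitz gradient. -/
lemma aux_bregman {h : E → ℝ} {g : E → E} {L : ℝ} (hL : 0 < L)
    (hg : ∀ x, HasGradientAt h (g x) x) (hconv : ConvexOn ℝ Set.univ h)
    (hlip : ∀ a b, ‖g a - g b‖ ≤ L * ‖a - b‖)
    (x y : E) :
    h x + ⟪g x, y - x⟫ + 1 / (2 * L) * ‖g y - g x‖ ^ 2 ≤ h y := by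
  set z := y - (1 / L) • (g y - g x) with hz
  have h1 := aux_first_order hg hconv x z
  have h2 := aux_descent hL hg hlip y z
  have hzy : z - y = -((1 / L) • (g y - g x)) := by rw [hz]; abel
  have hnorm : ‖z - y‖ ^ 2 = (1 / L) ^ 2 * ‖g y - g x‖ ^ 2 := by
    rw [hzy, norm_neg, norm_smul]
    simp [abs_of_pos (by positivity : (0:ℝ) < 1 / L), mul_pow]
  have hinner2 : ⟪g y, z - y⟫ = -(1 / L) * ⟪g y, g y - g x⟫ := by
    rw [hzy, inner_neg_right, real_inner_smul_right]; ring
  have hinner1 : ⟪g x, z - x⟫ = ⟪g x, y - x⟫ - (1 / L) * ⟪g x, g y - g x⟫ := by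
    have : z - x = (y - x) - (1 / L) • (g y - g x) := by rw [hz]; abel
    rw [this, inner_sub_right, real_inner_smul_right]
  have hnn : ⟪g y, g y - g x⟫ - ⟪g x, g y - g x⟫ = ‖g y - g x‖ ^ 2 := by
    rw [← inner_sub_left, real_inner_self_eq_norm_sq]
  have hL' : (0:ℝ) < 2 * L := by linarith
  have key : h x + ⟪g x, z - x⟫ ≤ h y + ⟪g y, z - y⟫ + L / 2 * ‖z - y‖ ^ 2 :=
    le_trans h1 h2
  rw [hinner1, hinner2, hnorm] at key
  have hLL : L / 2 * ((1 / L) ^ 2 * ‖g y - g x‖ ^ 2) = 1 / (2 * L) * ‖g y - g x‖ ^ 2 := by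
    field_simp
  rw [hLL] at key
  have hdiff : 1 / L * ⟪g y, g y - g x⟫ - 1 / L * ⟪g x, g y - g x⟫
      = 1 / L * ‖g y - g x‖ ^ 2 := by rw [← mul_sub, hnn]
  have hhalf : 1 / L * ‖g y - g x‖ ^ 2 = 2 * (1 / (2 * L) * ‖g y - g x‖ ^ 2) := by
    field_simp
  linarith [key, hdiff, hhalf]

end Aux

/-- If `f` is `m_f`-strongly convex with `L_f`-Lipschitz gradient `f'` and
`e := f' a − f' b − m_f (a − b)` satisfies `⟨e, a − b⟩ = 0`, then `e = 0`. -/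
theorem orthogonal_implies_zero {n : ℕ} (mf Lf : ℝ) (hmf : 0 < mf) (hLf : mf ≤ Lf)
    (f : EuclideanSpace ℝ (Fin n) → ℝ)
    (f' : EuclideanSpace ℝ (Fin n) → EuclideanSpace ℝ (Fin n))
    (hf' : ∀ x, HasGradientAt f (f' x) x)
    (hsc : ConvexOn ℝ Set.univ (fun x => f x - mf / 2 * ‖x‖ ^ 2))
    (hlip : ∀ a b, ‖f' a - f' b‖ ≤ Lf * ‖a - b‖)
    (a b : EuclideanSpace ℝ (Fin n))
    (horth : ⟪f' a - f' b - mf • (a - b), a - b⟫ = 0) :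
    f' a - f' b = mf • (a - b) := by
  classical
  set h : EuclideanSpace ℝ (Fin n) → ℝ := fun x => f x - mf / 2 * ‖x‖ ^ 2 with hh
  set g : EuclideanSpace ℝ (Fin n) → EuclideanSpace ℝ (Fin n) :=
    fun x => f' x - mf • x with hgdef
  set L : ℝ := Lf + mf with hLdef
  have hLf0 : 0 < Lf := lt_of_lt_of_le hmf hLf
  have hL : 0 < L := by rw [hLdef]; linarith
  -- gradient of h is g
  have hg : ∀ x, HasGradientAt h (g x) x := by
    intro x
    have h1 : HasFDerivAt f
        (InnerProductSpace.toDual ℝ (EuclideanSpace ℝ (Fin n)) (f' x)) x :=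
      (hf' x).hasFDerivAt
    have hq : HasFDerivAt (fun y : EuclideanSpace ℝ (Fin n) => ⟪y, y⟫)
        (InnerProductSpace.toDual ℝ (EuclideanSpace ℝ (Fin n)) ((2:ℝ) • x)) x := by
      have h0 := (hasFDerivAt_id (𝕜 := ℝ) x).inner ℝ (hasFDerivAt_id x)
      refine h0.congr_fderiv ?_
      apply ContinuousLinearMap.ext
      intro v
      simp [InnerProductSpace.toDual_apply_apply, real_inner_smul_left, real_inner_comm,
        fderivInnerCLM_apply, two_mul, mul_comm]
    have h2 : HasFDerivAt (fun y : EuclideanSpace ℝ (Fin n) => mf / 2 * ‖y‖ ^ 2)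
        (InnerProductSpace.toDual ℝ (EuclideanSpace ℝ (Fin n)) (mf • x)) x := by
      have h2' := hq.const_mul (mf / 2)
      have hfun : (fun y : EuclideanSpace ℝ (Fin n) => mf / 2 * ‖y‖ ^ 2)
          = fun y => mf / 2 * ⟪y, y⟫ := by
        funext y
        rw [real_inner_self_eq_norm_sq]
      rw [hfun]
      refine h2'.congr_fderiv ?_
      rw [← map_smul, smul_smul]
      norm_num
    have h3 := h1.sub h2
    rw [hasGradientAt_iff_hasFDerivAt]
    refine h3.congr_fderiv ?_
    rw [← map_sub]
  -- g is L-Lipschitz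
  have hglip : ∀ x y : EuclideanSpace ℝ (Fin n), ‖g x - g y‖ ≤ L * ‖x - y‖ := by
    intro x y
    have hxy : g x - g y = (f' x - f' y) - mf • (x - y) := by
      simp only [hgdef, smul_sub]; abel
    rw [hxy]
    calc ‖(f' x - f' y) - mf • (x - y)‖ ≤ ‖f' x - f' y‖ + ‖mf • (x - y)‖ :=
          norm_sub_le _ _
      _ ≤ Lf * ‖x - y‖ + mf * ‖x - y‖ := by
          gcongr
          · exact hlip x y
          · rw [norm_smul, Real.norm_eq_abs, abs_of_pos hmf]
      _ = L * ‖x - y‖ := by rw [hLdef]; ring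
  -- cocoercivity at (a, b)
  have h1 := aux_bregman hL hg hsc hglip a b
  have h2 := aux_bregman hL hg hsc hglip b a
  have he : g a - g b = f' a - f' b - mf • (a - b) := by
    simp only [hgdef, smul_sub]; abel
  have hsum : (1 / (2 * L)) * ‖g a - g b‖ ^ 2 + (1 / (2 * L)) * ‖g a - g b‖ ^ 2
      ≤ ⟪g a - g b, a - b⟫ := by
    have hi1 : ⟪g a, b - a⟫ = -⟪g a, a - b⟫ := by
      rw [← inner_neg_right]; congr 1; abel
    have hn1 : ‖g b - g a‖ = ‖g a - g b‖ := by rw [← norm_neg]; congr 1; abel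
    have hi2 : ⟪g a - g b, a - b⟫ = ⟪g a, a - b⟫ - ⟪g b, a - b⟫ := inner_sub_left _ _ _
    rw [hn1] at h1
    linarith [h1, h2, hi1, hi2]
  rw [he, horth] at hsum
  have hsq : ‖f' a - f' b - mf • (a - b)‖ ^ 2 ≤ 0 := by
    have h1L : (0:ℝ) < 1 / (2 * L) := by positivity
    nlinarith [sq_nonneg ‖f' a - f' b - mf • (a - b)‖]
  have hz : f' a - f' b - mf • (a - b) = 0 := by
    rw [← norm_eq_zero]
    nlinarith [norm_nonneg (f' a - f' b - mf • (a - b))]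
  exact sub_eq_zero.mp hz
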